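/- If p, q ∈ K* with p ≠ 1 and q ≠ 1, then the Gaddis two-parameter quantum Heisenberg algebra GH_{p,q} is not isomorphic to any generalized Heisenberg algebra H(λt) with λ ∈ K*, λ ≠ 1, because their sets of one-dimensional representations have different structures (one is all of K², the other is the union of two lines {αβ = 0}). -/

import Mathlib

/- STATEMENT 8: for p, q ∈ K* with p ≠ 1 and q ≠ 1, the Gaddis algebra GH_{p,q} is
not isomorphic (as a K-algebra) to any generalized Heisenberg algebra H(λt),
λ ∈ K*, λ ≠ 1. -/

noncomputable section

open FreeAlgebra Polynomial

variable (K : Type) [Field K]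

/-- Relations of `GH_{p,q}`. t = ι 0, x = ι 1, y = ι 2. -/
inductive ghpqRel (p q : K) : FreeAlgebra K (Fin 3) → FreeAlgebra K (Fin 3) → Prop
  | r1 : ghpqRel p q (ι K (2 : Fin 3) * ι K (1 : Fin 3) - q • (ι K (1 : Fin 3) * ι K (2 : Fin 3)))
      (ι K (0 : Fin 3))
  | r2 : ghpqRel p q (ι K (1 : Fin 3) * ι K (0 : Fin 3)) (p • (ι K (0 : Fin 3) * ι K (1 : Fin 3)))
  | r3 : ghpqRel p q (ι K (2 : Fin 3) * ι K (0 : Fin 3)) (p⁻¹ • (ι K (0 : Fin 3) * ι K (2 : Fin 3)))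

/-- The Gaddis two-parameter quantum Heisenberg algebra. -/
abbrev GHpq (p q : K) := RingQuot (ghpqRel K p q)

/-- Relations of the generalized Heisenberg algebra `H(f)`. t = ι 0, x = ι 1, y = ι 2. -/
inductive ghaRel (f : Polynomial K) : FreeAlgebra K (Fin 3) → FreeAlgebra K (Fin 3) → Prop
  | r1 : ghaRel f (ι K (0 : Fin 3) * ι K (1 : Fin 3))
      (ι K (1 : Fin 3) * Polynomial.aeval (ι K (0 : Fin 3)) f)
  | r2 : ghaRel f (ι K (2 : Fin 3) * ι K (0 : Fin 3))
      (Polynomial.aeval (ι K (0 : Fin 3)) f * ι K (2 : Fin 3))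
  | r3 : ghaRel f (ι K (2 : Fin 3) * ι K (1 : Fin 3) - ι K (1 : Fin 3) * ι K (2 : Fin 3))
      (Polynomial.aeval (ι K (0 : Fin 3)) f - ι K (0 : Fin 3))

/-- The generalized Heisenberg algebra `H(f)`. -/
abbrev GHA (f : Polynomial K) := RingQuot (ghaRel K f)


section Aux

lemma smul_cancel' {K : Type} [Field K] {M : Type*} [AddCommMonoid M] [Module K M]
    {c : K} (hc : c ≠ 0) {z : M} (h : c • z = 0) : z = 0 := by
  have h2 := congrArg (fun m => c⁻¹ • m) h
  simpa [smul_smul, inv_mul_cancel₀ hc] using h2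

/-- The commutator relation on an algebra. -/
def commRel (A : Type*) [Mul A] (a b : A) : Prop := ∃ x y : A, a = x * y ∧ b = y * x

instance abCommRing (A : Type*) [Ring A] : CommRing (RingQuot (commRel A)) :=
  { (inferInstance : Ring (RingQuot (commRel A))) with
    mul_comm := by
      intro u v
      obtain ⟨a, rfl⟩ := RingQuot.mkRingHom_surjective (commRel A) u
      obtain ⟨b, rfl⟩ := RingQuot.mkRingHom_surjective (commRel A) v
      rw [← map_mul, ← map_mul]
      exact RingQuot.mkRingHom_rel ⟨a, b, rfl, rfl⟩ }

end Aux

/-- `GH_{p,q}` (p, q ≠ 0, 1) is not isomorphic to any `H(λt)` (λ ≠ 0, 1). -/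
theorem stmt8 (p q : K) (hp0 : p ≠ 0) (hq0 : q ≠ 0) (hp1 : p ≠ 1) (hq1 : q ≠ 1)
    (l : K) (hl0 : l ≠ 0) (hl1 : l ≠ 1) :
    IsEmpty (GHpq K p q ≃ₐ[K] GHA K (C l * X)) := by
  constructor
  intro e
  classical
  -- the small commutative test algebra C0 = K[X]/(X^3)
  set I3 : Ideal (Polynomial K) := Ideal.span {(Polynomial.X : Polynomial K) ^ 3} with hI3
  let C0 := Polynomial K ⧸ I3
  let Xb : C0 := Ideal.Quotient.mk I3 Polynomial.X
  have hXb3 : Xb * (Xb * Xb) = 0 := by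
    show Ideal.Quotient.mk I3 Polynomial.X * (Ideal.Quotient.mk I3 Polynomial.X *
      Ideal.Quotient.mk I3 Polynomial.X) = 0
    rw [← map_mul, ← map_mul, Ideal.Quotient.eq_zero_iff_mem, hI3, Ideal.mem_span_singleton]
    exact ⟨1, by ring⟩
  have hXb3' : Xb * Xb * Xb = 0 := by rw [mul_assoc]; exact hXb3
  have hXb_ne : Xb ≠ 0 := by
    intro h
    rw [show (0 : C0) = Ideal.Quotient.mk I3 0 by simp, Ideal.Quotient.eq,
      sub_zero, hI3, Ideal.mem_span_singleton] at h
    have h2 := Polynomial.natDegree_le_of_dvd h Polynomial.X_ne_zero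
    simp [Polynomial.natDegree_X_pow] at h2
  -- the algebra map φ : GHpq → C0,  t ↦ (1-q)•Xb², x ↦ Xb, y ↦ Xb
  let φF : FreeAlgebra K (Fin 3) →ₐ[K] C0 :=
    FreeAlgebra.lift K ![(1 - q) • (Xb * Xb), Xb, Xb]
  have hφF0 : φF (ι K (0 : Fin 3)) = (1 - q) • (Xb * Xb) := by
    simp [φF, FreeAlgebra.lift_ι_apply]
  have hφF1 : φF (ι K (1 : Fin 3)) = Xb := by simp [φF, FreeAlgebra.lift_ι_apply]
  have hφF2 : φF (ι K (2 : Fin 3)) = Xb := by simp [φF, FreeAlgebra.lift_ι_apply]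
  have hφFrel : ∀ ⦃a b : FreeAlgebra K (Fin 3)⦄, ghpqRel K p q a b → φF a = φF b := by
    intro a b h
    cases h with
    | r1 =>
        rw [map_sub, map_mul, map_smul, map_mul, hφF0, hφF1, hφF2]
        rw [sub_smul, one_smul]
    | r2 =>
        rw [map_mul, map_smul, map_mul, hφF0, hφF1]
        simp [mul_smul_comm, smul_mul_assoc, hXb3, hXb3']
    | r3 =>
        rw [map_mul, map_smul, map_mul, hφF0, hφF2]
        simp [mul_smul_comm, smul_mul_assoc, hXb3, hXb3']
  let φ : GHpq K p q →ₐ[K] C0 := RingQuot.liftAlgHom K ⟨φF, hφFrel⟩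
  have hφ : ∀ a, φ (RingQuot.mkAlgHom K (ghpqRel K p q) a) = φF a := fun a =>
    RingQuot.liftAlgHom_mkAlgHom_apply K φF hφFrel a
  -- abbreviations for the generators
  set tP : GHpq K p q := RingQuot.mkAlgHom K (ghpqRel K p q) (ι K (0 : Fin 3)) with htP
  set xP : GHpq K p q := RingQuot.mkAlgHom K (ghpqRel K p q) (ι K (1 : Fin 3)) with hxP
  set yP : GHpq K p q := RingQuot.mkAlgHom K (ghpqRel K p q) (ι K (2 : Fin 3)) with hyP
  set tG : GHA K (C l * X) := RingQuot.mkAlgHom K (ghaRel K (C l * X)) (ι K (0 : Fin 3)) with htG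
  set xG : GHA K (C l * X) := RingQuot.mkAlgHom K (ghaRel K (C l * X)) (ι K (1 : Fin 3)) with hxG
  set yG : GHA K (C l * X) := RingQuot.mkAlgHom K (ghaRel K (C l * X)) (ι K (2 : Fin 3)) with hyG
  -- relations in GHpq
  have hr1 : yP * xP - q • (xP * yP) = tP := by
    have h := RingQuot.mkAlgHom_rel K (ghpqRel.r1 (p := p) (q := q))
    simpa [map_sub, map_mul, map_smul] using h
  have hr2 : xP * tP = p • (tP * xP) := by
    have h := RingQuot.mkAlgHom_rel K (ghpqRel.r2 (p := p) (q := q))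
    simpa [map_mul, map_smul] using h
  -- the abelianization of GHA
  let Ab := RingQuot (commRel (GHA K (C l * X)))
  let π : GHA K (C l * X) →ₐ[K] Ab := RingQuot.mkAlgHom K (commRel (GHA K (C l * X)))
  -- the polynomial algebra in two variables
  let P := MvPolynomial (Fin 2) K
  let φ2F : FreeAlgebra K (Fin 3) →ₐ[K] P :=
    FreeAlgebra.lift K ![0, MvPolynomial.X 0, MvPolynomial.X 1]
  have hφ2F0 : φ2F (ι K (0 : Fin 3)) = 0 := by simp [φ2F, FreeAlgebra.lift_ι_apply]
  have hφ2F1 : φ2F (ι K (1 : Fin 3)) = MvPolynomial.X 0 := by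
    simp [φ2F, FreeAlgebra.lift_ι_apply]
  have hφ2F2 : φ2F (ι K (2 : Fin 3)) = MvPolynomial.X 1 := by
    simp [φ2F, FreeAlgebra.lift_ι_apply]
  have hkey : φ2F (Polynomial.aeval (ι K (0 : Fin 3)) (C l * X)) = 0 := by
    rw [← Polynomial.aeval_algHom_apply, hφ2F0]
    simp
  have hφ2Frel : ∀ ⦃a b : FreeAlgebra K (Fin 3)⦄, ghaRel K (C l * X) a b → φ2F a = φ2F b := by
    intro a b h
    cases h with
    | r1 => rw [map_mul, map_mul, hφ2F0, hφ2F1, hkey, zero_mul, mul_zero]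
    | r2 => rw [map_mul, map_mul, hφ2F0, hφ2F2, hkey, zero_mul, mul_zero]
    | r3 =>
        rw [map_sub, map_mul, map_mul, map_sub, hφ2F0, hφ2F1, hφ2F2, hkey,
          mul_comm (MvPolynomial.X 1) (MvPolynomial.X 0), sub_self, sub_zero]
  let φ2 : GHA K (C l * X) →ₐ[K] P := RingQuot.liftAlgHom K ⟨φ2F, hφ2Frel⟩
  have hφ2 : ∀ a, φ2 (RingQuot.mkAlgHom K (ghaRel K (C l * X)) a) = φ2F a := fun a =>
    RingQuot.liftAlgHom_mkAlgHom_apply K φ2F hφ2Frel a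
  have hφ2comm : ∀ ⦃a b : GHA K (C l * X)⦄, commRel (GHA K (C l * X)) a b → φ2 a = φ2 b := by
    rintro a b ⟨u, v, rfl, rfl⟩
    rw [map_mul, map_mul]
    exact mul_comm _ _
  let Φ : Ab →ₐ[K] P := RingQuot.liftAlgHom K ⟨φ2, hφ2comm⟩
  have hΦ : ∀ a, Φ (π a) = φ2 a := fun a =>
    RingQuot.liftAlgHom_mkAlgHom_apply K φ2 hφ2comm a
  -- t is killed in the abelianization
  have hw0 : π tG = 0 := by
    have h := RingQuot.mkAlgHom_rel K (ghaRel.r3 (f := C l * X))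
    have h2 : yG * xG - xG * yG =
        RingQuot.mkAlgHom K (ghaRel K (C l * X)) (Polynomial.aeval (ι K (0 : Fin 3)) (C l * X))
          - tG := by
      simpa [map_sub, map_mul] using h
    have h3 : RingQuot.mkAlgHom K (ghaRel K (C l * X))
        (Polynomial.aeval (ι K (0 : Fin 3)) (C l * X)) = algebraMap K _ l * tG := by
      rw [← Polynomial.aeval_algHom_apply]
      simp [map_mul]
      rfl
    have h4 := congrArg π h2
    rw [map_sub, map_mul, map_mul, mul_comm (π yG) (π xG), sub_self, h3, map_sub,
      map_mul, AlgHom.commutes] at h4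
    have htest : ∀ (u v w : Ab), (u - v) * w = u * w - v * w := fun u v w => sub_mul u v w
    have h5 : algebraMap K Ab (l - 1) * π tG = 0 := by
      rw [map_sub, map_one, htest, one_mul, ← h4]
    have h6 : (1 : Ab) * π tG = 0 := by
      rw [show (1 : Ab) = algebraMap K Ab ((l - 1)⁻¹ * (l - 1)) by
            rw [inv_mul_cancel₀ (sub_ne_zero.mpr hl1), map_one],
        map_mul, mul_assoc, h5, mul_zero]
    rw [one_mul] at h6
    exact h6
  -- Ψ : P → Ab, a left inverse of Φ
  let Ψ : P →ₐ[K] Ab := MvPolynomial.aeval ![π xG, π yG]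
  have hΨΦ : ∀ z : Ab, Ψ (Φ z) = z := by
    have hext : (Ψ.comp Φ).comp π = π := by
      apply RingQuot.ringQuot_ext'
      apply FreeAlgebra.hom_ext
      funext i
      fin_cases i <;>
        simp only [Function.comp_apply, AlgHom.comp_apply, AlgHom.toLinearMap_apply]
      · show Ψ (Φ (π tG)) = π tG
        rw [hΦ, hφ2, hφ2F0, map_zero, hw0]
      · show Ψ (Φ (π xG)) = π xG
        rw [hΦ, hφ2, hφ2F1]
        exact MvPolynomial.aeval_X (R := K) (f := ![π xG, π yG]) (0 : Fin 2)
      · show Ψ (Φ (π yG)) = π yG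
        rw [hΦ, hφ2, hφ2F2]
        exact MvPolynomial.aeval_X (R := K) (f := ![π xG, π yG]) (1 : Fin 2)
    intro z
    obtain ⟨g, rfl⟩ := RingQuot.mkAlgHom_surjective K (commRel (GHA K (C l * X))) z
    have := congrArg (fun (h : GHA K (C l * X) →ₐ[K] Ab) => h g) hext
    simpa using this
  have hΦinj : ∀ z : Ab, Φ z = 0 → z = 0 := by
    intro z h
    rw [← hΨΦ z, h, map_zero]
  -- Λ : Ab → C0 via e.symm and φ
  have hΛrel : ∀ ⦃a b : GHA K (C l * X)⦄, commRel (GHA K (C l * X)) a b →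
      (φ.comp e.symm.toAlgHom) a = (φ.comp e.symm.toAlgHom) b := by
    rintro a b ⟨u, v, rfl, rfl⟩
    simp only [AlgHom.comp_apply, map_mul]
    exact mul_comm _ _
  let Λ : Ab →ₐ[K] C0 := RingQuot.liftAlgHom K ⟨φ.comp e.symm.toAlgHom, hΛrel⟩
  have hΛ : ∀ a, Λ (π a) = φ (e.symm a) := fun a =>
    RingQuot.liftAlgHom_mkAlgHom_apply K (φ.comp e.symm.toAlgHom) hΛrel a
  -- the composite ψ : GHpq → P
  let ψ : GHpq K p q →ₐ[K] P := Φ.comp (π.comp e.toAlgHom)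
  set α := ψ tP with hα
  set β := ψ xP with hβ
  set γ := ψ yP with hγ
  have hA1 : γ * β - q • (β * γ) = α := by
    have h := congrArg ψ hr1
    rw [map_sub, map_smul, map_mul, map_mul] at h
    exact h
  have hA2 : β * α = p • (α * β) := by
    have h := congrArg ψ hr2
    rw [map_smul, map_mul, map_mul] at h
    exact h
  have hαβ : α * β = 0 := by
    apply smul_cancel' (sub_ne_zero.mpr hp1.symm)
    rw [sub_smul, one_smul, ← hA2, mul_comm, sub_self]
  have hα' : α = (1 - q) • (β * γ) := by
    rw [← hA1, sub_smul, one_smul, mul_comm γ β]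
  have hββγ : β * γ * β = 0 := by
    apply smul_cancel' (sub_ne_zero.mpr hq1.symm)
    rw [← smul_mul_assoc, ← hα', hαβ]
  have hcases : β = 0 ∨ γ = 0 := by
    rcases mul_eq_zero.mp hββγ with h | h
    · rcases mul_eq_zero.mp h with h' | h'
      · exact Or.inl h'
      · exact Or.inr h'
    · exact Or.inl h
  rcases hcases with h | h
  · -- β = 0 : then π (e xP) = 0, so φ xP = Xb = 0, contradiction
    have h1 : π (e.toAlgHom xP) = 0 := hΦinj _ h
    have h2 := congrArg Λ h1
    rw [hΛ, map_zero] at h2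
    rw [show e.symm (e.toAlgHom xP) = xP from e.symm_apply_apply xP] at h2
    rw [hxP, hφ, hφF1] at h2
    exact hXb_ne h2
  · have h1 : π (e.toAlgHom yP) = 0 := hΦinj _ h
    have h2 := congrArg Λ h1
    rw [hΛ, map_zero] at h2
    rw [show e.symm (e.toAlgHom yP) = yP from e.symm_apply_apply yP] at h2
    rw [hyP, hφ, hφF2] at h2
    exact hXb_ne h2


end
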